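/- Let μ and ν be Borel probability measures on ℝ^m, each with finite second moment ∫‖x‖₂² dμ(x) < ∞ and ∫‖x‖₂² dν(x) < ∞, and let M(μ) = ∫ x xᵀ dμ(x) and M(ν) = ∫ x xᵀ dν(x) denote their second-moment matrices (defined entrywise). Then for every t > 0, the spectral norm of the difference satisfies ‖M(μ) − M(ν)‖₂ ≤ 2t·D_TV(μ, ν) + ∫_{‖x‖₂² > t} ‖x‖₂² dμ(x) + ∫_{‖x‖₂² > t} ‖x‖₂² dν(x), where D_TV(μ, ν) = sup_{A measurable} |μ(A) − ν(A)| is the total variation distance. -/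

import Mathlib

open Matrix MeasureTheory

/-- The spectral norm (largest singular value) of a real matrix, realized as the operator
norm of the induced linear map between Euclidean spaces. -/
noncomputable def matrixSpectralNorm {m n : ℕ} (A : Matrix (Fin m) (Fin n) ℝ) : ℝ :=
  ‖LinearMap.toContinuousLinearMap (Matrix.toEuclideanLin A)‖

/-- Total variation distance `D_TV(μ, ν) = sup_{A measurable} |μ(A) − ν(A)|`. -/
noncomputable def tvDist {V : Type*} [MeasurableSpace V] (μ ν : Measure V) : ℝ :=
  ⨆ A : {s : Set V // MeasurableSet s}, |(μ A).toReal - (ν A).toReal|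

/-- The second-moment matrix `M(μ) = ∫ x xᵀ dμ(x)`, defined entrywise. -/
noncomputable def secondMoment {m : ℕ} (μ : Measure (Fin m → ℝ)) :
    Matrix (Fin m) (Fin m) ℝ :=
  Matrix.of fun i j => ∫ x, x i * x j ∂μ

section TV
variable {V : Type*} [MeasurableSpace V] (μ ν : Measure V)
  [IsProbabilityMeasure μ] [IsProbabilityMeasure ν]

lemma bddAbove_tv : BddAbove (Set.range fun A : {s : Set V // MeasurableSet s} =>
    |(μ A).toReal - (ν A).toReal|) := by
  refine ⟨1, ?_⟩
  rintro x ⟨A, rfl⟩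
  have h1 : (μ A).toReal ≤ 1 := by
    simpa using ENNReal.toReal_mono (by simp) (prob_le_one (μ := μ) (s := A))
  have h2 : (ν A).toReal ≤ 1 := by
    simpa using ENNReal.toReal_mono (by simp) (prob_le_one (μ := ν) (s := A))
  have h3 : 0 ≤ (μ A).toReal := ENNReal.toReal_nonneg
  have h4 : 0 ≤ (ν A).toReal := ENNReal.toReal_nonneg
  rw [abs_le]; constructor <;> linarith

lemma tvDist_nonneg : 0 ≤ tvDist μ ν := by
  have := le_ciSup (bddAbove_tv μ ν) ⟨∅, MeasurableSet.empty⟩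
  simp only [Subtype.coe_mk] at this
  exact le_trans (abs_nonneg _) this

lemma measure_diff_le_tv {s : Set V} (hs : MeasurableSet s) :
    (μ s).toReal - (ν s).toReal ≤ tvDist μ ν :=
  le_trans (le_abs_self _) (le_ciSup (bddAbove_tv μ ν) ⟨s, hs⟩)

/-- Core bound: for `|g| ≤ c`, `∫ g dμ − ∫ g dν ≤ 2 c D_TV(μ,ν)`. -/
lemma integral_sub_le_two_mul_tv (g : V → ℝ) (hg : Measurable g) (c : ℝ)
    (hgc : ∀ x, |g x| ≤ c) :
    ∫ x, g x ∂μ - ∫ x, g x ∂ν ≤ 2 * c * tvDist μ ν := by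
  have hV : Nonempty V := by
    rcases isEmpty_or_nonempty V with h | h
    · exfalso
      have h1 := measure_univ (μ := μ)
      rw [Set.univ_eq_empty_iff.2 h] at h1
      simp at h1
    · exact h
  have hc : 0 ≤ c := le_trans (abs_nonneg _) (hgc Classical.ofNonempty)
  -- work with h := g + c, which satisfies 0 ≤ h ≤ 2c
  obtain ⟨s, hs, hs1, hs2⟩ := hahn_decomposition (μ := μ) (ν := ν)
  set h : V → ℝ := fun x => g x + c with hh
  have hh0 : ∀ x, 0 ≤ h x := fun x => by
    have := (abs_le.mp (hgc x)).1; simp only [hh]; linarith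
  have hh2c : ∀ x, h x ≤ 2 * c := fun x => by
    have := (abs_le.mp (hgc x)).2; simp only [hh]; linarith
  have hhm : Measurable h := hg.add_const c
  set H : V → ENNReal := fun x => ENNReal.ofReal (h x) with hH
  have hHm : Measurable H := hhm.ennreal_ofReal
  have hHle : ∀ x, H x ≤ ENNReal.ofReal (2 * c) := fun x =>
    ENNReal.ofReal_le_ofReal (hh2c x)
  have hHfin : ∀ (ρ : Measure V) [IsProbabilityMeasure ρ], ∫⁻ x, H x ∂ρ ≠ ⊤ := by
    intro ρ _
    refine ne_top_of_le_ne_top ?_ (lintegral_mono hHle)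
    simp [lintegral_const]
    exact ENNReal.mul_ne_top (by simp) ENNReal.ofReal_ne_top
  -- restriction comparison
  have hcompl : μ.restrict sᶜ ≤ ν.restrict sᶜ := by
    refine Measure.le_iff.mpr fun t ht => ?_
    rw [Measure.restrict_apply ht, Measure.restrict_apply ht]
    exact hs2 _ (ht.inter hs.compl) (Set.inter_subset_right)
  have hres : ν.restrict s ≤ μ.restrict s := by
    refine Measure.le_iff.mpr fun t ht => ?_
    rw [Measure.restrict_apply ht, Measure.restrict_apply ht]
    exact hs1 _ (ht.inter hs) (Set.inter_subset_right)
  -- key lintegral estimate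
  have key : ∫⁻ x, H x ∂μ ≤ ∫⁻ x, H x ∂ν + ENNReal.ofReal (2 * c) * (μ s - ν s) := by
    have split : ∀ (ρ : Measure V), ∫⁻ x, H x ∂ρ
        = ∫⁻ x, H x ∂(ρ.restrict s) + ∫⁻ x, H x ∂(ρ.restrict sᶜ) := by
      intro ρ
      rw [← lintegral_add_measure, Measure.restrict_add_restrict_compl hs]
    rw [split μ, split ν]
    have h1 : ∫⁻ x, H x ∂(μ.restrict sᶜ) ≤ ∫⁻ x, H x ∂(ν.restrict sᶜ) :=
      lintegral_mono' hcompl le_rfl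
    have h2 : ∫⁻ x, H x ∂(μ.restrict s)
        ≤ ∫⁻ x, H x ∂(ν.restrict s) + ENNReal.ofReal (2 * c) * (μ s - ν s) := by
      have hsub : μ.restrict s = (μ.restrict s - ν.restrict s) + ν.restrict s :=
        (Measure.sub_add_cancel_of_le hres).symm
      rw [hsub, lintegral_add_measure]
      rw [add_comm]
      gcongr
      calc ∫⁻ x, H x ∂(μ.restrict s - ν.restrict s)
          ≤ ∫⁻ _, ENNReal.ofReal (2 * c) ∂(μ.restrict s - ν.restrict s) :=
            lintegral_mono hHle
        _ = ENNReal.ofReal (2 * c) * (μ.restrict s - ν.restrict s) Set.univ := by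
            rw [lintegral_const]
        _ = ENNReal.ofReal (2 * c) * (μ s - ν s) := by
            rw [Measure.sub_apply MeasurableSet.univ hres,
              Measure.restrict_apply MeasurableSet.univ,
              Measure.restrict_apply MeasurableSet.univ, Set.univ_inter]
    calc _ ≤ (∫⁻ x, H x ∂(ν.restrict s) + ENNReal.ofReal (2 * c) * (μ s - ν s))
          + ∫⁻ x, H x ∂(ν.restrict sᶜ) := by gcongr
      _ = _ := by ring
  -- convert to real integrals
  have hint : ∀ (ρ : Measure V) [IsProbabilityMeasure ρ],
      ∫ x, h x ∂ρ = (∫⁻ x, H x ∂ρ).toReal := by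
    intro ρ _
    rw [integral_eq_lintegral_of_nonneg_ae (Filter.Eventually.of_forall hh0)
      hhm.aestronglyMeasurable]
  have hgint : ∀ (ρ : Measure V) [IsProbabilityMeasure ρ], Integrable g ρ := by
    intro ρ _
    exact Integrable.mono' (integrable_const c) hg.aestronglyMeasurable
      (Filter.Eventually.of_forall fun x => by simpa using hgc x)
  have hνs : ν s ≤ μ s := hs1 s hs le_rfl
  have hfin2 : ENNReal.ofReal (2 * c) * (μ s - ν s) ≠ ⊤ :=
    ENNReal.mul_ne_top ENNReal.ofReal_ne_top
      (ne_top_of_le_ne_top (measure_ne_top μ s) tsub_le_self)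
  have hreal : ∫ x, h x ∂μ ≤ ∫ x, h x ∂ν + 2 * c * ((μ s).toReal - (ν s).toReal) := by
    rw [hint μ, hint ν]
    calc (∫⁻ x, H x ∂μ).toReal
        ≤ (∫⁻ x, H x ∂ν + ENNReal.ofReal (2 * c) * (μ s - ν s)).toReal := by
          apply ENNReal.toReal_mono _ key
          exact ENNReal.add_ne_top.mpr ⟨hHfin ν, hfin2⟩
      _ = (∫⁻ x, H x ∂ν).toReal + 2 * c * ((μ s).toReal - (ν s).toReal) := by
          rw [ENNReal.toReal_add (hHfin ν) hfin2, ENNReal.toReal_mul,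
            ENNReal.toReal_ofReal (by linarith), ENNReal.toReal_sub_of_le hνs
              (measure_ne_top μ s)]
  have hμh : ∫ x, h x ∂μ = ∫ x, g x ∂μ + c := by
    simp only [hh]
    rw [integral_add (hgint μ) (integrable_const c)]
    simp
  have hνh : ∫ x, h x ∂ν = ∫ x, g x ∂ν + c := by
    simp only [hh]
    rw [integral_add (hgint ν) (integrable_const c)]
    simp
  have htv := measure_diff_le_tv μ ν hs
  rw [hμh, hνh] at hreal
  nlinarith [tvDist_nonneg μ ν]
end TV

open RealInnerProductSpace

/-- The core truncation estimate in the proof of Lemma 2.4 of the paper: the spectral norm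
of the difference of second-moment matrices of two probability measures on `ℝ^m` is bounded
by `2t·D_TV(μ, ν)` plus the truncated second moments above level `t`. -/
theorem secondMoment_diff_le_tv_add_tails (m : ℕ) (μ ν : Measure (Fin m → ℝ))
    [IsProbabilityMeasure μ] [IsProbabilityMeasure ν]
    (hμ : Integrable (fun x => ∑ i, (x i) ^ 2) μ)
    (hν : Integrable (fun x => ∑ i, (x i) ^ 2) ν) :
    ∀ t : ℝ, 0 < t →
      matrixSpectralNorm (secondMoment μ - secondMoment ν) ≤
        2 * t * tvDist μ ν
          + ∫ x in {x : Fin m → ℝ | t < ∑ i, (x i) ^ 2}, (∑ i, (x i) ^ 2) ∂μ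
          + ∫ x in {x : Fin m → ℝ | t < ∑ i, (x i) ^ 2}, (∑ i, (x i) ^ 2) ∂ν := by
  intro t ht
  classical
  set N : (Fin m → ℝ) → ℝ := fun x => ∑ i, (x i) ^ 2 with hNdef
  have hNm : Measurable N := Finset.measurable_sum _ fun i _ =>
    (measurable_pi_apply i).pow_const 2
  have hNnn : ∀ x, 0 ≤ N x := fun x => Finset.sum_nonneg fun i _ => sq_nonneg _
  set S : Set (Fin m → ℝ) := {x | t < N x} with hSdef
  have hSm : MeasurableSet S := measurableSet_lt measurable_const hNm
  have tailμ_nn : 0 ≤ ∫ x in S, N x ∂μ :=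
    setIntegral_nonneg hSm fun x _ => hNnn x
  have tailν_nn : 0 ≤ ∫ x in S, N x ∂ν :=
    setIntegral_nonneg hSm fun x _ => hNnn x
  have hD0 : 0 ≤ tvDist μ ν := tvDist_nonneg μ ν
  set D := tvDist μ ν with hDdef
  set C : ℝ := 2 * t * D + ∫ x in S, N x ∂μ + ∫ x in S, N x ∂ν with hCdef
  have hC0 : 0 ≤ C := by
    have : 0 ≤ 2 * t * D := by positivity
    simp only [hCdef]; linarith
  -- basic pointwise / integrability facts
  have habsij : ∀ (i j : Fin m) (x : Fin m → ℝ), |x i * x j| ≤ N x := by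
    intro i j x
    have h1 : (x i) ^ 2 ≤ N x := Finset.single_le_sum
      (fun k _ => sq_nonneg (x k)) (Finset.mem_univ i)
    have h2 : (x j) ^ 2 ≤ N x := Finset.single_le_sum
      (fun k _ => sq_nonneg (x k)) (Finset.mem_univ j)
    have := abs_mul (x i) (x j)
    nlinarith [sq_nonneg (|x i| - |x j|), sq_abs (x i), sq_abs (x j), abs_nonneg (x i * x j)]
  have hijm : ∀ i j : Fin m, Measurable fun x : Fin m → ℝ => x i * x j := fun i j =>
    (measurable_pi_apply i).mul (measurable_pi_apply j)
  have hij : ∀ (ρ : Measure (Fin m → ℝ)), Integrable N ρ →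
      ∀ i j, Integrable (fun x => x i * x j) ρ := by
    intro ρ hρ i j
    exact Integrable.mono' hρ (hijm i j).aestronglyMeasurable
      (Filter.Eventually.of_forall fun x => habsij i j x)
  -- the key bilinear estimate
  have key : ∀ u v : EuclideanSpace ℝ (Fin m),
      ⟪u, Matrix.toEuclideanLin (secondMoment μ - secondMoment ν) v⟫
        ≤ C * (‖u‖ * ‖v‖) := by
    intro u v
    set c : ℝ := ‖u‖ * ‖v‖ with hcdef
    have hc0 : 0 ≤ c := by positivity
    set F : (Fin m → ℝ) → ℝ := fun x => (∑ i, u i * x i) * (∑ j, v j * x j) with hFdef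
    have hFm : Measurable F :=
      (Finset.measurable_sum _ fun i _ => by fun_prop).mul
        (Finset.measurable_sum _ fun j _ => by fun_prop)
    -- pointwise Cauchy-Schwarz bound
    have hFle : ∀ x, |F x| ≤ c * N x := by
      intro x
      set x' : EuclideanSpace ℝ (Fin m) := (WithLp.equiv 2 (Fin m → ℝ)).symm x with hx'
      have hx'a : ∀ i, x' i = x i := fun i => rfl
      have hnorm : ‖x'‖ ^ 2 = N x := by
        rw [← real_inner_self_eq_norm_sq]
        simp only [PiLp.inner_apply, RCLike.inner_apply, starRingEnd_apply, star_trivial]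
        exact Finset.sum_congr rfl fun i _ => (sq (x i)).symm ▸ (pow_two (x i)).symm
      have h1 : |∑ i, u i * x i| ≤ ‖u‖ * ‖x'‖ := by
        have := abs_real_inner_le_norm u x'
        simpa [PiLp.inner_apply, RCLike.inner_apply, hx'a, mul_comm] using this
      have h2 : |∑ j, v j * x j| ≤ ‖v‖ * ‖x'‖ := by
        have := abs_real_inner_le_norm v x'
        simpa [PiLp.inner_apply, RCLike.inner_apply, hx'a, mul_comm] using this
      calc |F x| = |∑ i, u i * x i| * |∑ j, v j * x j| := abs_mul _ _
        _ ≤ (‖u‖ * ‖x'‖) * (‖v‖ * ‖x'‖) := by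
            apply mul_le_mul h1 h2 (abs_nonneg _) (by positivity)
        _ = c * N x := by rw [← hnorm]; ring
    have hFint : ∀ (ρ : Measure (Fin m → ℝ)), Integrable N ρ → Integrable F ρ := by
      intro ρ hρ
      refine Integrable.mono' (hρ.const_mul c) hFm.aestronglyMeasurable
        (Filter.Eventually.of_forall fun x => ?_)
      simpa using hFle x
    -- the inner product equals ∫F dμ - ∫F dν
    have hFrep : ∀ (ρ : Measure (Fin m → ℝ)), Integrable N ρ →
        ∫ x, F x ∂ρ = ∑ i, ∑ j, u i * v j * ∫ x, x i * x j ∂ρ := by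
      intro ρ hρ
      have hFx : ∀ x, F x = ∑ i, ∑ j, u i * v j * (x i * x j) := by
        intro x
        simp only [hFdef, Finset.sum_mul_sum]
        exact Finset.sum_congr rfl fun i _ => Finset.sum_congr rfl fun j _ => by ring
      calc ∫ x, F x ∂ρ = ∫ x, ∑ i, ∑ j, u i * v j * (x i * x j) ∂ρ := by
            simp_rw [hFx]
        _ = ∑ i, ∑ j, u i * v j * ∫ x, x i * x j ∂ρ := by
            rw [integral_finset_sum _ fun i _ => integrable_finset_sum _
              fun j _ => ((hij ρ hρ i j).const_mul _)]
            exact Finset.sum_congr rfl fun i _ => by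
              rw [integral_finset_sum _ fun j _ => ((hij ρ hρ i j).const_mul _)]
              exact Finset.sum_congr rfl fun j _ => integral_const_mul _ _
    have hinner : ⟪u, Matrix.toEuclideanLin (secondMoment μ - secondMoment ν) v⟫
        = ∫ x, F x ∂μ - ∫ x, F x ∂ν := by
      rw [hFrep μ hμ, hFrep ν hν, ← Finset.sum_sub_distrib]
      simp only [PiLp.inner_apply, RCLike.inner_apply, starRingEnd_apply, star_trivial,
        Matrix.toEuclideanLin_apply]
      refine Finset.sum_congr rfl fun i _ => ?_
      have : ((secondMoment μ - secondMoment ν) *ᵥ v.ofLp) i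
          = ∑ j, (secondMoment μ - secondMoment ν) i j * v j := rfl
      rw [this, Finset.sum_mul, ← Finset.sum_sub_distrib]
      refine Finset.sum_congr rfl fun j _ => ?_
      simp only [secondMoment, Matrix.sub_apply, Matrix.of_apply]
      ring
    -- split into bounded part and tails
    set G : (Fin m → ℝ) → ℝ := Sᶜ.indicator F with hGdef
    set Tl : (Fin m → ℝ) → ℝ := S.indicator F with hTdef
    have hsplit : ∀ (ρ : Measure (Fin m → ℝ)), Integrable N ρ →
        ∫ x, F x ∂ρ = ∫ x, G x ∂ρ + ∫ x, Tl x ∂ρ := by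
      intro ρ hρ
      rw [← integral_add ((hFint ρ hρ).indicator hSm.compl) ((hFint ρ hρ).indicator hSm)]
      congr 1
      funext x
      by_cases hx : x ∈ S <;> simp [hGdef, hTdef, Set.indicator_apply, hx]
    have hGm : Measurable G := hFm.indicator hSm.compl
    have hGle : ∀ x, |G x| ≤ t * c := by
      intro x
      by_cases hx : x ∈ S
      · simp only [hGdef, Set.indicator_apply, Set.mem_compl_iff, hx, not_true_eq_false,
          if_false, abs_zero]
        positivity
      · have hxS : N x ≤ t := not_lt.mp hx
        simp only [hGdef, Set.indicator_apply, Set.mem_compl_iff, hx, not_false_eq_true,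
          if_true]
        calc |F x| ≤ c * N x := hFle x
          _ ≤ c * t := by exact mul_le_mul_of_nonneg_left hxS hc0
          _ = t * c := mul_comm _ _
    have hGbound : ∫ x, G x ∂μ - ∫ x, G x ∂ν ≤ 2 * (t * c) * D :=
      integral_sub_le_two_mul_tv μ ν G hGm (t * c) hGle
    -- tail bounds
    have hTlbound : ∀ (ρ : Measure (Fin m → ℝ)), Integrable N ρ →
        |∫ x, Tl x ∂ρ| ≤ c * ∫ x in S, N x ∂ρ := by
      intro ρ hρ
      calc |∫ x, Tl x ∂ρ| ≤ ∫ x, |Tl x| ∂ρ :=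
            by simpa [Real.norm_eq_abs] using norm_integral_le_integral_norm (μ := ρ) Tl
        _ ≤ ∫ x, S.indicator (fun y => c * N y) x ∂ρ := by
            apply integral_mono ((hFint ρ hρ).indicator hSm).abs
              ((hρ.const_mul c).indicator hSm)
            intro x
            simp only [hTdef, Set.indicator_apply]
            by_cases hx : x ∈ S <;> simp [hx, hFle x]
        _ = ∫ x in S, c * N x ∂ρ := integral_indicator hSm
        _ = c * ∫ x in S, N x ∂ρ := integral_const_mul _ _
    have h1 := hsplit μ hμ
    have h2 := hsplit ν hν
    have h3 := abs_le.mp (hTlbound μ hμ)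
    have h4 := abs_le.mp (hTlbound ν hν)
    rw [hinner, h1, h2]
    have : 2 * (t * c) * D = (2 * t * D) * c := by ring
    simp only [hCdef]
    nlinarith [h3.2, h4.2, hGbound]
  -- conclude the operator norm bound
  rw [matrixSpectralNorm]
  refine ContinuousLinearMap.opNorm_le_bound _ hC0 fun v => ?_
  set T := Matrix.toEuclideanLin (secondMoment μ - secondMoment ν) with hTdef
  have happ : (LinearMap.toContinuousLinearMap T) v = T v := rfl
  rw [happ]
  have hk := key (T v) v
  have hsq : ⟪T v, T v⟫ = ‖T v‖ ^ 2 := real_inner_self_eq_norm_sq _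
  rw [hsq] at hk
  rcases eq_or_lt_of_le (norm_nonneg (T v)) with h0 | h0
  · rw [← h0]; positivity
  · nlinarith [norm_nonneg v]
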